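/- arXiv:1503.05800 — 2 statements merged into one kernel-verified Lean document; each statement's English description precedes it below -/
import Mathlib

section
/- The set {g : ZMod N → ℂ | ∃ λ ∈ (ZMod N)², ⟨g, Π_λ g⟩ = 0} is a null set with respect to the product Lebesgue measure (volume) on the space of functions ZMod N → ℂ. Consequently, a standard complex Gaussian random vector g ∈ ℂ^N satisfies ⟨g, Π_λ g⟩ ≠ 0 for every λ ∈ (ZMod N)² with probability 1. -/
open Complex Finset

/-- `gw N m = ω^m` where `ω = exp(2πi/N)` and `m : ZMod N`. -/
noncomputable def gw (N : ℕ) (m : ZMod N) : ℂ :=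
  Complex.exp (2 * Real.pi * Complex.I * (m.val : ℂ) / (N : ℂ))

/-- Translation operator `(T_p x)(n) = x(n-p)`. -/
def Tr (N : ℕ) (p : ZMod N) (x : ZMod N → ℂ) : ZMod N → ℂ :=
  fun n => x (n - p)

/-- Modulation operator `(M_ℓ x)(n) = ω^{ℓ·n} x(n)`. -/
noncomputable def Md (N : ℕ) (l : ZMod N) (x : ZMod N → ℂ) : ZMod N → ℂ :=
  fun n => gw N (l * n) * x n

/-- Time-frequency shift `Π_{(p,ℓ)} = M_ℓ ∘ T_p`. -/
noncomputable def Pig (N : ℕ) (p l : ZMod N) (x : ZMod N → ℂ) : ZMod N → ℂ :=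
  Md N l (Tr N p x)

/-- Inner product, conjugate linear in the first argument. -/
noncomputable def inn (N : ℕ) [NeZero N] (x y : ZMod N → ℂ) : ℂ :=
  ∑ j : ZMod N, (starRingEnd ℂ) (x j) * y j

open MeasureTheory Function

section Aux

/-- `{i // ¬ i ≠ i0}` is a one-element type. -/
def auxUnique {N : ℕ} (i0 : ZMod N) : Unique {i : ZMod N // ¬ i ≠ i0} :=
  ⟨⟨⟨i0, by simp⟩⟩, fun a => Subtype.ext (not_not.mp a.2)⟩

/-- Fubini-type lemma: if every one-coordinate slice of a measurable set is null,
the set is null. -/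
lemma null_of_slices {N : ℕ} [NeZero N] (i0 : ZMod N) (S : Set (ZMod N → ℂ))
    (hS : MeasurableSet S)
    (h : ∀ g : ZMod N → ℂ, volume {z : ℂ | Function.update g i0 z ∈ S} = 0) :
    volume S = 0 := by
  haveI := auxUnique i0
  set e := MeasurableEquiv.piEquivPiSubtypeProd (fun _ : ZMod N => ℂ) (fun i => i ≠ i0) with he
  have hmp := volume_preserving_piEquivPiSubtypeProd (fun _ : ZMod N => ℂ) (fun i => i ≠ i0)
  have hSm : MeasurableSet (e.symm ⁻¹' S) := e.symm.measurable hS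
  have hrw : S = e ⁻¹' (e.symm ⁻¹' S) := by
    ext g; simp
  rw [hrw, hmp.measure_preimage hSm.nullMeasurableSet, Measure.volume_eq_prod _ _,
    Measure.measure_prod_null hSm]
  refine Filter.Eventually.of_forall fun x => ?_
  show volume (Prod.mk x ⁻¹' (⇑e.symm ⁻¹' S)) = 0
  set g0 : ZMod N → ℂ := e.symm (x, fun _ => 0) with hg0
  have key : ∀ y : ({i : ZMod N // ¬ i ≠ i0} → ℂ),
      e.symm (x, y) = Function.update g0 i0 (y default) := by
    intro y; funext i
    by_cases hi : i ≠ i0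
    · rw [Function.update_of_ne hi]
      simp [he, hg0, MeasurableEquiv.piEquivPiSubtypeProd, Equiv.piEquivPiSubtypeProd, hi]
    · have hi' : i = i0 := not_not.mp hi
      subst hi'
      rw [Function.update_self]
      have h2 : e.symm (x, y) i = y ⟨i, hi⟩ := by
        simp [he, MeasurableEquiv.piEquivPiSubtypeProd, Equiv.piEquivPiSubtypeProd, hi]
      rw [h2]
      exact congrArg y (Subsingleton.elim _ _)
  have hset : (Prod.mk x ⁻¹' (e.symm ⁻¹' S))
      = Function.eval (default : {i : ZMod N // ¬ i ≠ i0}) ⁻¹'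
        {z : ℂ | Function.update g0 i0 z ∈ S} := by
    ext y
    simp only [Set.mem_preimage, Set.mem_setOf_eq, key y, Function.eval]
  have hmeas : MeasurableSet {z : ℂ | Function.update g0 i0 z ∈ S} :=
    (measurable_update g0) hS
  rw [hset, volume_pi]
  exact Measure.pi_eval_preimage_null _ (h g0)

/-- Solutions of `|z|² + c = 0` form a null subset of `ℂ`. -/
lemma circle_null (c : ℂ) : volume {z : ℂ | (Complex.normSq z : ℂ) + c = 0} = 0 := by
  have hsub : {z : ℂ | (Complex.normSq z : ℂ) + c = 0} ⊆
      Metric.sphere (0 : ℂ) (Real.sqrt (-c).re) := by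
    intro z hz
    have hz' : (Complex.normSq z : ℂ) + c = 0 := hz
    have h1 : (Complex.normSq z : ℂ) = -c := by linear_combination hz'
    have h2 : Complex.normSq z = (-c).re := by rw [← h1]; simp
    rw [mem_sphere_zero_iff_norm, Complex.norm_def, h2]
  exact measure_mono_null hsub (Measure.addHaar_sphere volume _ _)

/-- The real-linear map `z ↦ a z + b z̄`. -/
noncomputable def rlin (a b : ℂ) : ℂ →ₗ[ℝ] ℂ where
  toFun z := a * z + b * (starRingEnd ℂ) z
  map_add' x y := by simp; ring
  map_smul' m z := by
    simp [Complex.real_smul]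
    ring

/-- Solutions of `a z + b z̄ + c = 0` with `a ≠ 0` form a null subset of `ℂ`. -/
lemma line_null (a b c : ℂ) (ha : a ≠ 0) :
    volume {z : ℂ | a * z + b * (starRingEnd ℂ) z + c = 0} = 0 := by
  set φ := rlin a b with hφ
  have hset : {z : ℂ | a * z + b * (starRingEnd ℂ) z + c = 0} = {z : ℂ | φ z = -c} := by
    ext z; simp only [Set.mem_setOf_eq, hφ, rlin, LinearMap.coe_mk, AddHom.coe_mk]
    constructor <;> intro h <;> linear_combination h
  rw [hset]
  rcases Set.eq_empty_or_nonempty {z : ℂ | φ z = -c} with he | ⟨z0, hz0⟩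
  · simp [he]
  · have hz0' : φ z0 = -c := hz0
    have hker : LinearMap.ker φ ≠ ⊤ := by
      intro hk
      have h1 : φ 1 = 0 := by
        have : (1 : ℂ) ∈ LinearMap.ker φ := hk ▸ Submodule.mem_top
        simpa using this
      have hI : φ Complex.I = 0 := by
        have : (Complex.I : ℂ) ∈ LinearMap.ker φ := hk ▸ Submodule.mem_top
        simpa using this
      simp only [hφ, rlin, LinearMap.coe_mk, AddHom.coe_mk, mul_one, map_one] at h1
      simp only [hφ, rlin, LinearMap.coe_mk, AddHom.coe_mk, Complex.conj_I] at hI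
      have hab : a = b := by
        linear_combination (-Complex.I) * hI + (a - b) * Complex.I_mul_I
      apply ha
      linear_combination (1/2 : ℂ) * h1 + (1/2 : ℂ) * hab
    have hset2 : {z : ℂ | φ z = -c} = (fun z => z + (-z0)) ⁻¹' (LinearMap.ker φ : Set ℂ) := by
      ext z
      simp only [Set.mem_setOf_eq, Set.mem_preimage, SetLike.mem_coe, LinearMap.mem_ker,
        map_add, map_neg, hz0']
      constructor <;> intro h
      · rw [h]; ring
      · linear_combination h
    rw [hset2, measure_preimage_add_right]
    exact Measure.addHaar_submodule volume _ hker

lemma gw_zero (N : ℕ) [NeZero N] : gw N 0 = 1 := by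
  simp [gw]

lemma gw_ne_zero (N : ℕ) (m : ZMod N) : gw N m ≠ 0 := Complex.exp_ne_zero _

/-- For a fixed time-frequency shift, the set of bad generators is null. -/
lemma single_null (N : ℕ) [NeZero N] (p l : ZMod N) :
    volume {g : ZMod N → ℂ |
      ∑ j : ZMod N, (starRingEnd ℂ) (g j) * (gw N (l * j) * g (j - p)) = 0} = 0 := by
  set F : (ZMod N → ℂ) → ℂ :=
    fun g => ∑ j : ZMod N, (starRingEnd ℂ) (g j) * (gw N (l * j) * g (j - p)) with hF
  have hFc : Continuous F := by
    refine continuous_finset_sum _ fun j _ => ?_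
    exact (Complex.continuous_conj.comp (continuous_apply j)).mul
      (continuous_const.mul (continuous_apply (j - p)))
  have hSm : MeasurableSet {g : ZMod N → ℂ | F g = 0} :=
    hFc.measurable (measurableSet_singleton 0)
  by_cases hp : p = 0
  · subst hp
    refine null_of_slices 0 _ hSm fun g => ?_
    have hkey : ∀ z : ℂ,
        F (Function.update g 0 z)
          = (Complex.normSq z : ℂ)
            + ∑ j ∈ Finset.univ.erase (0 : ZMod N),
                (starRingEnd ℂ) (g j) * (gw N (l * j) * g j) := by
      intro z
      show ∑ j : ZMod N, (starRingEnd ℂ) (Function.update g 0 z j)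
          * (gw N (l * j) * Function.update g 0 z (j - 0)) = _
      rw [← Finset.add_sum_erase _ _ (Finset.mem_univ (0 : ZMod N))]
      congr 1
      · rw [sub_zero, Function.update_self, mul_zero, gw_zero, one_mul,
          ← Complex.normSq_eq_conj_mul_self]
      · refine Finset.sum_congr rfl fun j hj => ?_
        rw [sub_zero, Function.update_of_ne (Finset.mem_erase.mp hj).1]
    have : {z : ℂ | Function.update g 0 z ∈ {g : ZMod N → ℂ | F g = 0}}
        = {z : ℂ | (Complex.normSq z : ℂ)
            + ∑ j ∈ Finset.univ.erase (0 : ZMod N),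
                (starRingEnd ℂ) (g j) * (gw N (l * j) * g j) = 0} := by
      ext z; simp only [Set.mem_setOf_eq, hkey z]
    rw [this]
    exact circle_null _
  · -- p ≠ 0
    have hsub : {g : ZMod N → ℂ | F g = 0}
        ⊆ {g : ZMod N → ℂ | g p = 0}
          ∪ ({g : ZMod N → ℂ | F g = 0} ∩ {g : ZMod N → ℂ | g p ≠ 0}) := by
      intro g hg
      by_cases h : g p = 0
      · exact Or.inl h
      · exact Or.inr ⟨hg, h⟩
    refine measure_mono_null hsub (measure_union_null ?_ ?_)
    · rw [volume_pi]
      exact Measure.pi_eval_preimage_null _ (measure_singleton 0)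
    · have hTm : MeasurableSet {g : ZMod N → ℂ | g p ≠ 0} :=
        (continuous_apply p).measurable (measurableSet_singleton 0).compl
      refine null_of_slices 0 _ (hSm.inter hTm) fun g => ?_
      by_cases hgp : g p = 0
      · refine measure_mono_null (fun z hz => ?_) (measure_empty (μ := volume))
        exfalso
        have h2 : (Function.update g 0 z) p ≠ 0 := hz.2
        rw [Function.update_of_ne hp] at h2
        exact h2 hgp
      · set A : ℂ := (starRingEnd ℂ) (g p) * gw N (l * p) with hA
        set B : ℂ := g (-p) with hB
        set C : ℂ := ∑ j ∈ (Finset.univ.erase (0 : ZMod N)).erase p,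
            (starRingEnd ℂ) (g j) * (gw N (l * j) * g (j - p)) with hC
        have hkey : ∀ z : ℂ,
            F (Function.update g 0 z) = A * z + B * (starRingEnd ℂ) z + C := by
          intro z
          show ∑ j : ZMod N, (starRingEnd ℂ) (Function.update g 0 z j)
              * (gw N (l * j) * Function.update g 0 z (j - p)) = _
          have hpmem : p ∈ Finset.univ.erase (0 : ZMod N) :=
            Finset.mem_erase.mpr ⟨hp, Finset.mem_univ _⟩
          rw [← Finset.add_sum_erase _ _ (Finset.mem_univ (0 : ZMod N)),
            ← Finset.add_sum_erase _ _ hpmem]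
          have h0 : (starRingEnd ℂ) ((Function.update g 0 z) 0)
              * (gw N (l * 0) * (Function.update g 0 z) (0 - p))
              = (starRingEnd ℂ) z * (1 * g (-p)) := by
            rw [Function.update_self, mul_zero, gw_zero, zero_sub,
              Function.update_of_ne (neg_ne_zero.mpr hp)]
          have h1 : (starRingEnd ℂ) ((Function.update g 0 z) p)
              * (gw N (l * p) * (Function.update g 0 z) (p - p))
              = (starRingEnd ℂ) (g p) * (gw N (l * p) * z) := by
            rw [Function.update_of_ne hp, sub_self, Function.update_self]
          have hrest : ∑ j ∈ (Finset.univ.erase (0 : ZMod N)).erase p,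
              (starRingEnd ℂ) ((Function.update g 0 z) j)
                * (gw N (l * j) * (Function.update g 0 z) (j - p)) = C := by
            refine Finset.sum_congr rfl fun j hj => ?_
            have hj1 : j ≠ p := (Finset.mem_erase.mp hj).1
            have hj2 : j ≠ 0 := (Finset.mem_erase.mp (Finset.mem_erase.mp hj).2).1
            rw [Function.update_of_ne hj2, Function.update_of_ne (sub_ne_zero.mpr hj1)]
          rw [h0, h1, hrest, hA, hB]
          ring
        have hsub2 : {z : ℂ | Function.update g 0 z ∈
              {g : ZMod N → ℂ | F g = 0} ∩ {g : ZMod N → ℂ | g p ≠ 0}}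
            ⊆ {z : ℂ | A * z + B * (starRingEnd ℂ) z + C = 0} := by
          intro z hz
          have := hz.1
          rw [Set.mem_setOf_eq, hkey z] at this
          exact this
        have hAne : A ≠ 0 := mul_ne_zero (by simpa using hgp) (gw_ne_zero N _)
        exact measure_mono_null hsub2 (line_null A B C hAne)

end Aux

/-- The set of generators failing `⟨g, Π_λ g⟩ ≠ 0` for some `λ` is a Lebesgue
null set; hence a standard complex Gaussian generator satisfies the condition
almost surely. -/
theorem bad_generators_null (N : ℕ) [NeZero N] :
    MeasureTheory.volume
      {g : ZMod N → ℂ | ∃ μ : ZMod N × ZMod N, inn N g (Pig N μ.1 μ.2 g) = 0} = 0 := by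
  have hrw : {g : ZMod N → ℂ | ∃ μ : ZMod N × ZMod N, inn N g (Pig N μ.1 μ.2 g) = 0}
      = ⋃ μ : ZMod N × ZMod N, {g : ZMod N → ℂ |
          ∑ j : ZMod N, (starRingEnd ℂ) (g j) * (gw N (μ.2 * j) * g (j - μ.1)) = 0} := by
    ext g
    simp only [Set.mem_setOf_eq, Set.mem_iUnion]
    rfl
  rw [hrw]
  exact measure_iUnion_null fun μ => single_null N μ.1 μ.2
end

section
/- Let N ≥ 2 and let g : ZMod N → ℂ be the Alltop sequence, g(n) = (1/√N)·ω^{n³}, where n³ is computed in ZMod N. Then the Gabor system (g_λ)_{λ ∈ (ZMod N)²} does not allow phase retrieval: ⟨g, Π_{(0,ℓ)} g⟩ = 0 for every ℓ ≠ 0, and there exist x, y : ZMod N → ℂ with |⟨x, g_λ⟩| = |⟨y, g_λ⟩| for every λ ∈ (ZMod N)², yet x ≠ c • y for every c ∈ ℂ with |c| = 1. -/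
open Complex Finset

lemma gw_eq_pow (N : ℕ) (hN : N ≠ 0) (m : ZMod N) :
    gw N m = Complex.exp (2 * Real.pi * Complex.I / N) ^ m.val := by
  rw [← Complex.exp_nat_mul, gw]
  congr 1
  have : (N : ℂ) ≠ 0 := Nat.cast_ne_zero.mpr hN
  field_simp

lemma abs_gw (N : ℕ) (m : ZMod N) : ‖gw N m‖ = 1 := by
  have : gw N m = Complex.exp (((2 * Real.pi * m.val / N : ℝ) : ℂ) * Complex.I) := by
    rw [gw]; congr 1; push_cast; ring
  rw [this, Complex.norm_exp_ofReal_mul_I]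

lemma conj_gw_mul (N : ℕ) (m : ZMod N) :
    (starRingEnd ℂ) (gw N m) * gw N m = 1 := by
  rw [mul_comm, Complex.mul_conj]
  norm_cast
  rw [← Complex.sq_norm, abs_gw]; norm_num

lemma sum_gw (N : ℕ) [NeZero N] (l : ZMod N) (hl : l ≠ 0) :
    ∑ j : ZMod N, gw N (l * j) = 0 := by
  have hN : N ≠ 0 := NeZero.ne N
  set ζ := Complex.exp (2 * Real.pi * Complex.I / N) with hζ
  have hprim : IsPrimitiveRoot ζ N := Complex.isPrimitiveRoot_exp N hN
  have hζN : ζ ^ N = 1 := hprim.pow_eq_one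
  have hmod : ∀ a : ℕ, ζ ^ (a % N) = ζ ^ a := by
    intro a
    conv_rhs => rw [← Nat.div_add_mod a N]
    rw [pow_add, pow_mul, hζN, one_pow, one_mul]
  have key : ∀ j : ZMod N, gw N (l * j) = (ζ ^ l.val) ^ j.val := by
    intro j
    rw [gw_eq_pow N hN, ZMod.val_mul, hmod, pow_mul]
  simp_rw [key]
  have hrange : ∑ j : ZMod N, (ζ ^ l.val) ^ j.val = ∑ i ∈ range N, (ζ ^ l.val) ^ i := by
    refine Finset.sum_nbij' (fun j => j.val) (fun i => (i : ZMod N)) ?_ ?_ ?_ ?_ ?_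
    · intro j _; exact mem_range.mpr (ZMod.val_lt j)
    · intro i _; exact mem_univ _
    · intro j _; exact ZMod.natCast_rightInverse j
    · intro i hi; exact ZMod.val_cast_of_lt (mem_range.mp hi)
    · intro j _; rfl
  have hw1 : ζ ^ l.val ≠ 1 := by
    apply hprim.pow_ne_one_of_pos_of_lt
    · exact (fun h => hl ((ZMod.val_eq_zero l).mp h))
    · exact ZMod.val_lt l
  rw [hrange, geom_sum_eq hw1, ← pow_mul, mul_comm, pow_mul, hζN, one_pow]
  simp

lemma inn_delta (N : ℕ) [NeZero N] (a : ZMod N) (h : ZMod N → ℂ) :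
    inn N (fun n => if n = a then 1 else 0) h = h a := by
  rw [inn]
  rw [Finset.sum_eq_single a]
  · simp
  · intro b _ hb; simp [hb]
  · intro h; exact absurd (mem_univ a) h

/-- The Alltop sequence `g(n) = N^{-1/2} ω^{n³}` satisfies
`⟨g, Π_{(0,ℓ)} g⟩ = 0` for all `ℓ ≠ 0`, and its Gabor system does not allow
phase retrieval. -/
theorem no_phase_retrieval_Alltop (N : ℕ) [NeZero N] (hN : 2 ≤ N)
    (g : ZMod N → ℂ) (hgdef : ∀ n : ZMod N, g n = (1 / Real.sqrt N : ℂ) * gw N (n ^ 3)) :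
    (∀ l : ZMod N, l ≠ 0 → inn N g (Pig N 0 l g) = 0) ∧
    ∃ x y : ZMod N → ℂ,
      (∀ p l : ZMod N,
        ‖inn N x (Pig N p l g)‖ = ‖inn N y (Pig N p l g)‖) ∧
      ∀ c : ℂ, ‖c‖ = 1 → x ≠ c • y := by
  haveI : Fact (1 < N) := ⟨hN⟩
  set s : ℂ := (1 / Real.sqrt N : ℂ) with hs
  have habsg : ∀ n : ZMod N, ‖g n‖ = ‖s‖ := by
    intro n; rw [hgdef, norm_mul, abs_gw, mul_one]
  constructor
  · intro l hl
    have hterm : ∀ j : ZMod N,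
        (starRingEnd ℂ) (g j) * Pig N 0 l g j
          = ((starRingEnd ℂ) s * s) * gw N (l * j) := by
      intro j
      simp only [Pig, Md, Tr, sub_zero, hgdef]
      rw [map_mul]
      have h1 := conj_gw_mul N (j ^ 3)
      calc (starRingEnd ℂ) s * (starRingEnd ℂ) (gw N (j ^ 3)) *
            (gw N (l * j) * (s * gw N (j ^ 3)))
          = ((starRingEnd ℂ) s * s) * gw N (l * j) *
            ((starRingEnd ℂ) (gw N (j ^ 3)) * gw N (j ^ 3)) := by ring
        _ = ((starRingEnd ℂ) s * s) * gw N (l * j) := by rw [h1, mul_one]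
    rw [inn]
    simp_rw [hterm]
    rw [← Finset.mul_sum, sum_gw N l hl, mul_zero]
  · refine ⟨(fun n => if n = 0 then 1 else 0), (fun n => if n = 1 then 1 else 0), ?_, ?_⟩
    · intro p l
      rw [inn_delta, inn_delta]
      simp only [Pig, Md, Tr]
      rw [norm_mul, norm_mul, abs_gw, abs_gw, habsg, habsg]
    · intro c hc heq
      have h0 := congrFun heq 0
      have h01 : (0 : ZMod N) ≠ 1 := zero_ne_one
      simp [h01] at h0
end
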